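/- Let a₁,…,aₙ be positive reals and w₁,…,wₙ nonnegative weights with Σᵢ wᵢ = 1, and let M(a₁,…,aₙ; w₁,…,wₙ) be the informational mean, i.e. the Fisher information ∫_ℝ (p'(x))²/p(x) dx of the mixture density p(x) = Σᵢ wᵢ φ_{σᵢ}(x) with σᵢ² = 1/aᵢ. Then the informational mean lies between the weighted harmonic and arithmetic means: (Σᵢ wᵢ/aᵢ)^{-1} ≤ M(a₁,…,aₙ; w₁,…,wₙ) ≤ Σᵢ wᵢ aᵢ. -/

import Mathlib

open MeasureTheory Real

/-- The centered Gaussian density with scale `σ`: `φ_σ(x) = (2πσ²)^{-1/2} exp(−x²/(2σ²))`. -/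
noncomputable def gaussianDensity (σ : ℝ) (x : ℝ) : ℝ :=
  (2 * π * σ ^ 2) ^ (-(1 : ℝ) / 2) * Real.exp (-x ^ 2 / (2 * σ ^ 2))

/-- The informational mean of positive reals `a₁,…,aₙ` with weights `w₁,…,wₙ`: the Fisher
information of the Gaussian scale mixture `p(x) = Σᵢ wᵢ φ_{σᵢ}(x)` with `σᵢ² = 1/aᵢ`. -/
noncomputable def informationalMean (n : ℕ) (w a : Fin n → ℝ) : ℝ :=
  ∫ x : ℝ, (deriv (fun y => ∑ i, w i * gaussianDensity (Real.sqrt (1 / a i)) y) x) ^ 2 /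
    (∑ i, w i * gaussianDensity (Real.sqrt (1 / a i)) x)


lemma integrable_sq_mul_exp_neg_mul_sq {b : ℝ} (hb : 0 < b) :
    Integrable (fun x : ℝ => x ^ 2 * Real.exp (-b * x ^ 2)) := by
  have := integrable_rpow_mul_exp_neg_mul_sq hb (s := 2) (by norm_num)
  refine this.congr (Filter.Eventually.of_forall fun x => ?_)
  simp only
  rw [show ((2:ℝ)) = ((2:ℕ):ℝ) by norm_num, rpow_natCast]

lemma integral_sq_mul_exp_neg_mul_sq {b : ℝ} (hb : 0 < b) :
    ∫ x : ℝ, x ^ 2 * Real.exp (-b * x ^ 2) = (1 / (2 * b)) * Real.sqrt (π / b) := by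
  have hderiv : ∀ x : ℝ, HasDerivAt (fun y : ℝ => -(y / (2 * b)) * Real.exp (-b * y ^ 2))
      (x ^ 2 * Real.exp (-b * x ^ 2) - (1 / (2 * b)) * Real.exp (-b * x ^ 2)) x := by
    intro x
    have h1 : HasDerivAt (fun y : ℝ => -(y / (2 * b))) (-(1 / (2 * b))) x := by
      simpa using ((hasDerivAt_id x).div_const (2 * b)).fun_neg
    have h2 : HasDerivAt (fun y : ℝ => Real.exp (-b * y ^ 2)) (Real.exp (-b * x ^ 2) * (-b * (2 * x))) x := by
      have hx : HasDerivAt (fun y : ℝ => -b * y ^ 2) (-b * (2 * x)) x := by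
        simpa using ((hasDerivAt_pow 2 x)).const_mul (-b)
      exact (Real.hasDerivAt_exp (-b * x ^ 2)).comp x hx
    have := h1.mul h2
    refine HasDerivAt.congr_deriv (by exact this) ?_
    field_simp
    ring
  have hint' : Integrable (fun x : ℝ => x ^ 2 * Real.exp (-b * x ^ 2) - (1 / (2 * b)) * Real.exp (-b * x ^ 2)) :=
    (integrable_sq_mul_exp_neg_mul_sq hb).sub ((integrable_exp_neg_mul_sq hb).const_mul _)
  have hint : Integrable (fun x : ℝ => -(x / (2 * b)) * Real.exp (-b * x ^ 2)) := by
    have := (integrable_mul_exp_neg_mul_sq hb).const_mul (-(1 / (2 * b)))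
    refine this.congr (Filter.Eventually.of_forall fun x => ?_)
    ring
  have h0 := integral_eq_zero_of_hasDerivAt_of_integrable hderiv hint' hint
  rw [integral_sub (integrable_sq_mul_exp_neg_mul_sq hb) ((integrable_exp_neg_mul_sq hb).const_mul _),
    sub_eq_zero] at h0
  rw [h0, integral_const_mul, integral_gaussian]

noncomputable def gc (a : ℝ) : ℝ := (2 * π * (1 / a)) ^ (-(1:ℝ) / 2)

lemma gc_pos {a : ℝ} (ha : 0 < a) : 0 < gc a :=
  Real.rpow_pos_of_pos (by positivity) _

lemma gd_eq {a : ℝ} (ha : 0 < a) (x : ℝ) :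
    gaussianDensity (Real.sqrt (1 / a)) x = gc a * Real.exp (-(a / 2) * x ^ 2) := by
  unfold gaussianDensity gc
  rw [Real.sq_sqrt (by positivity : (0:ℝ) ≤ 1 / a)]
  congr 1
  field_simp

lemma gd_pos {a : ℝ} (ha : 0 < a) (x : ℝ) : 0 < gaussianDensity (Real.sqrt (1 / a)) x := by
  rw [gd_eq ha]
  exact mul_pos (gc_pos ha) (Real.exp_pos _)

lemma gc_mul_sqrt {a : ℝ} (ha : 0 < a) : gc a * Real.sqrt (π / (a / 2)) = 1 := by
  have h1 : π / (a / 2) = 2 * π * (1 / a) := by field_simp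
  have h2 : (0:ℝ) < 2 * π * (1 / a) := by positivity
  rw [h1, Real.sqrt_eq_rpow, gc, ← Real.rpow_add h2]
  norm_num

lemma integrable_gd {a : ℝ} (ha : 0 < a) :
    Integrable (fun x => gaussianDensity (Real.sqrt (1 / a)) x) := by
  have : Integrable (fun x : ℝ => gc a * Real.exp (-(a / 2) * x ^ 2)) :=
    (integrable_exp_neg_mul_sq (by positivity : (0:ℝ) < a / 2)).const_mul _
  exact this.congr (Filter.Eventually.of_forall fun x => (gd_eq ha x).symm)

lemma integrable_sq_gd {a : ℝ} (ha : 0 < a) :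
    Integrable (fun x => x ^ 2 * gaussianDensity (Real.sqrt (1 / a)) x) := by
  have : Integrable (fun x : ℝ => gc a * (x ^ 2 * Real.exp (-(a / 2) * x ^ 2))) :=
    (integrable_sq_mul_exp_neg_mul_sq (by positivity : (0:ℝ) < a / 2)).const_mul _
  refine this.congr (Filter.Eventually.of_forall fun x => ?_)
  simp only [gd_eq ha]; ring

lemma integral_gd {a : ℝ} (ha : 0 < a) :
    ∫ x : ℝ, gaussianDensity (Real.sqrt (1 / a)) x = 1 := by
  have : ∫ x : ℝ, gaussianDensity (Real.sqrt (1 / a)) x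
      = ∫ x : ℝ, gc a * Real.exp (-(a / 2) * x ^ 2) := by
    congr 1; funext x; exact gd_eq ha x
  rw [this, integral_const_mul, integral_gaussian, gc_mul_sqrt ha]

lemma integral_sq_gd {a : ℝ} (ha : 0 < a) :
    ∫ x : ℝ, x ^ 2 * gaussianDensity (Real.sqrt (1 / a)) x = 1 / a := by
  have h : ∫ x : ℝ, x ^ 2 * gaussianDensity (Real.sqrt (1 / a)) x
      = ∫ x : ℝ, gc a * (x ^ 2 * Real.exp (-(a / 2) * x ^ 2)) := by
    congr 1; funext x; rw [gd_eq ha]; ring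
  rw [h, integral_const_mul, integral_sq_mul_exp_neg_mul_sq (by positivity : (0:ℝ) < a / 2)]
  have : (1 : ℝ) / (2 * (a / 2)) = 1 / a := by field_simp
  rw [this, ← mul_assoc, mul_comm (gc a) (1 / a), mul_assoc, gc_mul_sqrt ha, mul_one]

lemma hasDerivAt_gd {a : ℝ} (ha : 0 < a) (x : ℝ) :
    HasDerivAt (fun y => gaussianDensity (Real.sqrt (1 / a)) y)
      (-(a * x) * gaussianDensity (Real.sqrt (1 / a)) x) x := by
  have hfun : (fun y => gaussianDensity (Real.sqrt (1 / a)) y)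
      = fun y => gc a * Real.exp (-(a / 2) * y ^ 2) := funext fun y => gd_eq ha y
  rw [hfun, gd_eq ha]
  have hx : HasDerivAt (fun y : ℝ => -(a / 2) * y ^ 2) (-(a / 2) * (2 * x)) x := by
    simpa using (hasDerivAt_pow 2 x).const_mul (-(a / 2))
  have he : HasDerivAt (fun y : ℝ => Real.exp (-(a / 2) * y ^ 2))
      (Real.exp (-(a / 2) * x ^ 2) * (-(a / 2) * (2 * x))) x :=
    (Real.hasDerivAt_exp _).comp x hx
  have := he.const_mul (gc a)
  refine this.congr_deriv ?_
  ring

lemma continuous_gd (σ : ℝ) : Continuous (gaussianDensity σ) := by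
  unfold gaussianDensity; fun_prop

/-- The informational mean lies between the weighted harmonic and arithmetic means. -/
theorem informationalMean_between_harmonic_arithmetic (n : ℕ) (hn : 1 ≤ n) (w a : Fin n → ℝ)
    (hw : ∀ i, 0 ≤ w i) (hws : ∑ i, w i = 1) (ha : ∀ i, 0 < a i) :
    (∑ i, w i / a i)⁻¹ ≤ informationalMean n w a ∧
      informationalMean n w a ≤ ∑ i, w i * a i := by
  have hq : ∀ x : ℝ, HasDerivAt (fun y => ∑ i, w i * gaussianDensity (Real.sqrt (1 / a i)) y)
      (∑ i, w i * (-(a i * x) * gaussianDensity (Real.sqrt (1 / a i)) x)) x := by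
    intro x
    exact HasDerivAt.fun_sum fun i _ => (hasDerivAt_gd (ha i) x).const_mul (w i)
  have hIM : informationalMean n w a =
      ∫ x : ℝ, (∑ i, w i * (-(a i * x) * gaussianDensity (Real.sqrt (1 / a i)) x)) ^ 2 /
        (∑ i, w i * gaussianDensity (Real.sqrt (1 / a i)) x) := by
    unfold informationalMean
    congr 1; funext x; rw [(hq x).deriv]
  set P : ℝ → ℝ := fun x => ∑ i, w i * gaussianDensity (Real.sqrt (1 / a i)) x with hPdef
  set D : ℝ → ℝ := fun x => ∑ i, w i * (-(a i * x) * gaussianDensity (Real.sqrt (1 / a i)) x)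
    with hDdef
  set Q : ℝ → ℝ := fun x => ∑ i, (w i * a i ^ 2) * (x ^ 2 * gaussianDensity (Real.sqrt (1 / a i)) x)
    with hQdef
  obtain ⟨i₀, hi₀⟩ : ∃ i, 0 < w i := by
    by_contra h
    push_neg at h
    have : ∑ i, w i = 0 := Finset.sum_eq_zero fun i _ => le_antisymm (h i) (hw i)
    rw [hws] at this; norm_num at this
  have hPpos : ∀ x, 0 < P x := by
    intro x
    have h1 : w i₀ * gaussianDensity (Real.sqrt (1 / a i₀)) x ≤ P x :=
      Finset.single_le_sum (fun i _ => mul_nonneg (hw i) (gd_pos (ha i) x).le) (Finset.mem_univ i₀)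
    exact lt_of_lt_of_le (mul_pos hi₀ (gd_pos (ha i₀) x)) h1
  -- continuity
  have hPcont : Continuous P :=
    continuous_finset_sum _ fun i _ => continuous_const.mul (continuous_gd _)
  have hDcont : Continuous D :=
    continuous_finset_sum _ fun i _ =>
      continuous_const.mul (((continuous_const.mul continuous_id).neg).mul (continuous_gd _))
  -- integrability
  have hx2Pint : Integrable (fun x => x ^ 2 * P x) := by
    have h : Integrable (fun x : ℝ => ∑ i, w i * (x ^ 2 * gaussianDensity (Real.sqrt (1 / a i)) x)) :=
      integrable_finset_sum _ fun i _ => (integrable_sq_gd (ha i)).const_mul _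
    refine h.congr (Filter.Eventually.of_forall fun x => ?_)
    simp only [hPdef, Finset.mul_sum]
    exact Finset.sum_congr rfl fun i _ => by ring
  have hxDint : Integrable (fun x => x * D x) := by
    have h : Integrable (fun x : ℝ =>
        ∑ i, (w i * (-(a i))) * (x ^ 2 * gaussianDensity (Real.sqrt (1 / a i)) x)) :=
      integrable_finset_sum _ fun i _ => (integrable_sq_gd (ha i)).const_mul _
    refine h.congr (Filter.Eventually.of_forall fun x => ?_)
    simp only [hDdef, Finset.mul_sum]
    exact Finset.sum_congr rfl fun i _ => by ring
  have hQint : Integrable Q :=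
    integrable_finset_sum _ fun i _ => (integrable_sq_gd (ha i)).const_mul _
  -- integral values
  have hPA : ∫ x : ℝ, x ^ 2 * P x = ∑ i, w i / a i := by
    have h : ∫ x : ℝ, x ^ 2 * P x
        = ∫ x : ℝ, ∑ i, w i * (x ^ 2 * gaussianDensity (Real.sqrt (1 / a i)) x) := by
      congr 1; funext x
      simp only [hPdef, Finset.mul_sum]
      exact Finset.sum_congr rfl fun i _ => by ring
    rw [h, integral_finset_sum _ fun i _ => (integrable_sq_gd (ha i)).const_mul _]
    refine Finset.sum_congr rfl fun i _ => ?_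
    rw [integral_const_mul, integral_sq_gd (ha i), mul_one_div]
  have hxD : ∫ x : ℝ, x * D x = -1 := by
    have h : ∫ x : ℝ, x * D x
        = ∫ x : ℝ, ∑ i, (w i * (-(a i))) * (x ^ 2 * gaussianDensity (Real.sqrt (1 / a i)) x) := by
      congr 1; funext x
      simp only [hDdef, Finset.mul_sum]
      exact Finset.sum_congr rfl fun i _ => by ring
    rw [h, integral_finset_sum _ fun i _ => (integrable_sq_gd (ha i)).const_mul _]
    have h2 : ∀ i ∈ Finset.univ, (∫ x : ℝ, (w i * (-(a i)))
        * (x ^ 2 * gaussianDensity (Real.sqrt (1 / a i)) x)) = -(w i) := by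
      intro i _
      rw [integral_const_mul, integral_sq_gd (ha i)]
      have hai : a i ≠ 0 := (ha i).ne'
      field_simp
    rw [Finset.sum_congr rfl h2]
    simp [hws]
  have hQval : ∫ x : ℝ, Q x = ∑ i, w i * a i := by
    rw [hQdef, integral_finset_sum _ fun i _ => (integrable_sq_gd (ha i)).const_mul _]
    refine Finset.sum_congr rfl fun i _ => ?_
    rw [integral_const_mul, integral_sq_gd (ha i)]
    field_simp [(ha i).ne']
  -- pointwise Cauchy-Schwarz
  have hCS : ∀ x, (D x) ^ 2 ≤ P x * Q x := by
    intro x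
    refine Finset.sum_sq_le_sum_mul_sum_of_sq_eq_mul Finset.univ
      (fun i _ => mul_nonneg (hw i) (gd_pos (ha i) x).le)
      (fun i _ => mul_nonneg (mul_nonneg (hw i) (sq_nonneg _))
        (mul_nonneg (sq_nonneg _) (gd_pos (ha i) x).le))
      (fun i _ => by ring)
  have hFIint : Integrable (fun x => (D x) ^ 2 / P x) := by
    refine hQint.mono' (((hDcont.pow 2).div hPcont fun x => (hPpos x).ne').aestronglyMeasurable)
      (Filter.Eventually.of_forall fun x => ?_)
    rw [Real.norm_eq_abs, abs_of_nonneg (div_nonneg (sq_nonneg _) (hPpos x).le)]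
    exact (div_le_iff₀ (hPpos x)).2 (by linarith [hCS x])
  -- upper bound
  have hupper : informationalMean n w a ≤ ∑ i, w i * a i := by
    rw [hIM, ← hQval]
    exact integral_mono hFIint hQint fun x => (div_le_iff₀ (hPpos x)).2 (by linarith [hCS x])
  -- lower bound
  set A : ℝ := ∑ i, w i / a i with hAdef
  have hApos : 0 < A :=
    Finset.sum_pos' (fun i _ => div_nonneg (hw i) (ha i).le)
      ⟨i₀, Finset.mem_univ i₀, div_pos hi₀ (ha i₀)⟩
  have hE : ∀ x, 0 ≤ x ^ 2 * P x / A ^ 2 + 2 * (x * D x) / A + (D x) ^ 2 / P x := by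
    intro x
    have hEeq : x ^ 2 * P x / A ^ 2 + 2 * (x * D x) / A + (D x) ^ 2 / P x
        = (x * P x + D x * A) ^ 2 / (A ^ 2 * P x) := by
      field_simp [(hPpos x).ne', hApos.ne']
      ring
    rw [hEeq]
    exact div_nonneg (sq_nonneg _) (mul_nonneg (sq_nonneg A) (hPpos x).le)
  have hint1 : Integrable (fun x => x ^ 2 * P x / A ^ 2) := hx2Pint.div_const _
  have hint2 : Integrable (fun x => 2 * (x * D x) / A) := by
    have := (hxDint.const_mul 2).div_const A
    exact this.congr (Filter.Eventually.of_forall fun x => rfl)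
  have h0 : 0 ≤ ∫ x : ℝ, (x ^ 2 * P x / A ^ 2 + 2 * (x * D x) / A + (D x) ^ 2 / P x) :=
    integral_nonneg hE
  have hint12 : Integrable (fun x => x ^ 2 * P x / A ^ 2 + 2 * (x * D x) / A) :=
    hint1.add hint2
  rw [integral_add hint12 hFIint, integral_add hint1 hint2] at h0
  have e1 : ∫ x : ℝ, x ^ 2 * P x / A ^ 2 = A / A ^ 2 := by
    rw [integral_div, hPA]
  have e2 : ∫ x : ℝ, 2 * (x * D x) / A = (2 * (-1)) / A := by
    rw [integral_div, integral_const_mul, hxD]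
  rw [e1, e2] at h0
  have hA0 : A ≠ 0 := hApos.ne'
  have hA2 : A / A ^ 2 = A⁻¹ := by rw [sq, ← div_div, div_self hA0, one_div]
  have hA3 : (2 * (-1)) / A = -(2 * A⁻¹) := by rw [div_eq_mul_inv]; ring
  rw [hA2, hA3] at h0
  have hIM2 : informationalMean n w a = ∫ x : ℝ, (D x) ^ 2 / P x := hIM
  have hI : A⁻¹ ≤ ∫ x : ℝ, (D x) ^ 2 / P x := by linarith
  refine ⟨?_, hupper⟩
  rw [hIM2]
  exact hI
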